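/- Fix m ≥ 1 and let S = { x_{i,j}(±1), x_{i,j}(±t₁), ..., x_{i,j}(±t_m) : 1 ≤ i,j ≤ 3, i ≠ j } ⊆ St_{A₂}(ℤ[t₁,...,t_m]). There is a universal constant C > 0 such that for all 1 ≤ i,j ≤ 3 with i ≠ j: (i) for every d ∈ ℕ ∪ {0} and every monomial t̲ in ℤ[t₁,...,t_m], |x_{i,j}(2^d·t̲)|_S ≤ C·(1 + (d + deg(t̲))²); and (ii) for every a ∈ ℤ∖{0} and every monomial t̲, |x_{i,j}(a·t̲)|_S ≤ C·(1 + (log₂|a|)³ + (deg(t̲))²). -/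

import Mathlib

/-- Generators of the Steinberg group `St_{A₂}(R)`: one generator `x_{i,j}(p)` for each
pair `i ≠ j` in `{1,2,3}` and each `p ∈ R`. -/
def SteinbergGen (R : Type*) : Type _ := { q : Fin 3 × Fin 3 // q.1 ≠ q.2 } × R

/-- The free generator corresponding to `x_{i,j}(p)`. -/
def fgen {R : Type*} (i j : Fin 3) (h : i ≠ j) (p : R) : FreeGroup (SteinbergGen R) :=
  FreeGroup.of (⟨⟨(i, j), h⟩, p⟩ : SteinbergGen R)

open scoped commutatorElement

/-- The defining relations of the Steinberg group `St_{A₂}(R)`: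
additivity in each root subgroup, the commutator relation
`[x_{i,j}(p), x_{j,k}(q)] = x_{i,k}(pq)`, and triviality of the commutators
`[x_{i,j}(p), x_{i,k}(q)]` and `[x_{j,i}(p), x_{k,i}(q)]`. -/
def steinbergRels (R : Type*) [CommRing R] : Set (FreeGroup (SteinbergGen R)) :=
  { w | ∃ (i j : Fin 3) (h : i ≠ j) (p q : R),
      w = fgen i j h p * fgen i j h q * (fgen i j h (p + q))⁻¹ } ∪
  { w | ∃ (i j k : Fin 3) (hij : i ≠ j) (hjk : j ≠ k) (hik : i ≠ k) (p q : R),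
      w = ⁅fgen i j hij p, fgen j k hjk q⁆ * (fgen i k hik (p * q))⁻¹ } ∪
  { w | ∃ (i j k : Fin 3) (hij : i ≠ j) (hik : i ≠ k) (hjk : j ≠ k) (p q : R),
      w = ⁅fgen i j hij p, fgen i k hik q⁆ } ∪
  { w | ∃ (i j k : Fin 3) (hji : j ≠ i) (hki : k ≠ i) (hjk : j ≠ k) (p q : R),
      w = ⁅fgen j i hji p, fgen k i hki q⁆ }

/-- The Steinberg group `St_{A₂}(R)`, presented by the generators `x_{i,j}(p)` subject
to the Steinberg relations. -/
def SteinbergA2 (R : Type*) [CommRing R] : Type _ := PresentedGroup (steinbergRels R)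

instance (R : Type*) [CommRing R] : Group (SteinbergA2 R) :=
  inferInstanceAs (Group (PresentedGroup (steinbergRels R)))

/-- The generator `x_{i,j}(p)` of the Steinberg group `St_{A₂}(R)`. -/
def stx {R : Type*} [CommRing R] (i j : Fin 3) (h : i ≠ j) (p : R) : SteinbergA2 R :=
  PresentedGroup.of (⟨⟨(i, j), h⟩, p⟩ : SteinbergGen R)

/-- The word length of `g` with respect to a generating set `S`: the least `n` such that
`g` is a product of `n` elements of `S`. -/
noncomputable def wordLength {Γ : Type*} [Group Γ] (S : Set Γ) (g : Γ) : ℕ :=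
  sInf { n | ∃ l : List Γ, l.length = n ∧ (∀ s ∈ l, s ∈ S) ∧ l.prod = g }

/-- The generating set
`S = { x_{i,j}(±1), x_{i,j}(±t₁), …, x_{i,j}(±t_m) : 1 ≤ i,j ≤ 3, i ≠ j }`
of `St_{A₂}(ℤ[t₁,…,t_m])`. -/
def stdGens (m : ℕ) : Set (SteinbergA2 (MvPolynomial (Fin m) ℤ)) :=
  { g | ∃ (i j : Fin 3) (h : i ≠ j) (p : MvPolynomial (Fin m) ℤ),
      (p = 1 ∨ p = -1 ∨ ∃ l : Fin m, p = MvPolynomial.X l ∨ p = -MvPolynomial.X l) ∧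
      g = stx i j h p }

section Basic
variable {R : Type*} [CommRing R]

lemma mk_rel_one {r : FreeGroup (SteinbergGen R)} (hr : r ∈ steinbergRels R) :
    PresentedGroup.mk (steinbergRels R) r = 1 := by
  have : r ∈ Subgroup.normalClosure (steinbergRels R) := Subgroup.subset_normalClosure hr
  exact (QuotientGroup.eq_one_iff r).mpr this

lemma stx_mul (i j : Fin 3) (h : i ≠ j) (p q : R) :
    stx i j h p * stx i j h q = stx i j h (p + q) := by
  have hr : fgen i j h p * fgen i j h q * (fgen i j h (p + q))⁻¹ ∈ steinbergRels R :=
    Or.inl (Or.inl (Or.inl ⟨i, j, h, p, q, rfl⟩))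
  have h1 := mk_rel_one hr
  rw [map_mul, map_mul, map_inv, mul_inv_eq_one] at h1
  exact h1

lemma stx_zero (i j : Fin 3) (h : i ≠ j) : stx i j h (0 : R) = 1 := by
  have h1 := stx_mul i j h (0 : R) 0
  rw [add_zero] at h1
  calc stx i j h (0:R) = stx i j h 0 * stx i j h 0 * (stx i j h 0)⁻¹ := by group
  _ = stx i j h 0 * (stx i j h 0)⁻¹ := by rw [h1]
  _ = 1 := mul_inv_cancel _

lemma stx_neg (i j : Fin 3) (h : i ≠ j) (p : R) :
    stx i j h (-p) = (stx i j h p)⁻¹ := by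
  have h1 := stx_mul i j h p (-p)
  rw [add_neg_cancel, stx_zero] at h1
  exact eq_inv_of_mul_eq_one_right h1

lemma stx_comm (i k j : Fin 3) (hik : i ≠ k) (hkj : k ≠ j) (hij : i ≠ j) (p q : R) :
    stx i j hij (p * q) = ⁅stx i k hik p, stx k j hkj q⁆ := by
  have hr : ⁅fgen i k hik p, fgen k j hkj q⁆ * (fgen i j hij (p * q))⁻¹ ∈ steinbergRels R :=
    Or.inl (Or.inl (Or.inr ⟨i, k, j, hik, hkj, hij, p, q, rfl⟩))
  have h1 := mk_rel_one hr
  rw [commutatorElement_def] at h1 ⊢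
  rw [map_mul, map_mul, map_mul, map_mul, map_inv, map_inv, map_inv, mul_inv_eq_one] at h1
  exact h1.symm

lemma third (i j : Fin 3) (h : i ≠ j) : ∃ k, i ≠ k ∧ k ≠ j := by
  revert h; revert i j; decide

end Basic
section RepAPI
open MvPolynomial

variable {m : ℕ}

/-- `g` is a product of at most `n` standard generators. -/
def SRep (m : ℕ) (g : SteinbergA2 (MvPolynomial (Fin m) ℤ)) (n : ℕ) : Prop :=
  ∃ l : List (SteinbergA2 (MvPolynomial (Fin m) ℤ)),
    l.length ≤ n ∧ (∀ s ∈ l, s ∈ stdGens m) ∧ l.prod = g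

lemma SRep.mono {g : SteinbergA2 (MvPolynomial (Fin m) ℤ)} {n n' : ℕ}
    (h : SRep m g n) (hn : n ≤ n') : SRep m g n' := by
  obtain ⟨l, h1, h2, h3⟩ := h; exact ⟨l, h1.trans hn, h2, h3⟩

lemma SRep.one : SRep m 1 0 := ⟨[], by simp, by simp, by simp⟩

lemma SRep.mul {g g' : SteinbergA2 (MvPolynomial (Fin m) ℤ)} {n n' : ℕ}
    (h : SRep m g n) (h' : SRep m g' n') : SRep m (g * g') (n + n') := by
  obtain ⟨l, h1, h2, h3⟩ := h
  obtain ⟨l', h1', h2', h3'⟩ := h'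
  refine ⟨l ++ l', ?_, ?_, ?_⟩
  · simp only [List.length_append]; omega
  · intro s hs; rcases List.mem_append.mp hs with hs | hs
    · exact h2 s hs
    · exact h2' s hs
  · rw [List.prod_append, h3, h3']

lemma stdGens_inv {g : SteinbergA2 (MvPolynomial (Fin m) ℤ)} (hg : g ∈ stdGens m) :
    g⁻¹ ∈ stdGens m := by
  obtain ⟨i, j, h, p, hp, rfl⟩ := hg
  refine ⟨i, j, h, -p, ?_, (stx_neg i j h p).symm⟩
  rcases hp with rfl | rfl | ⟨l, rfl | rfl⟩
  · exact Or.inr (Or.inl rfl)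
  · exact Or.inl (neg_neg 1)
  · exact Or.inr (Or.inr ⟨l, Or.inr rfl⟩)
  · exact Or.inr (Or.inr ⟨l, Or.inl (neg_neg _)⟩)

lemma SRep.inv {g : SteinbergA2 (MvPolynomial (Fin m) ℤ)} {n : ℕ}
    (h : SRep m g n) : SRep m g⁻¹ n := by
  obtain ⟨l, h1, h2, h3⟩ := h
  refine ⟨(l.map fun x => x⁻¹).reverse, by simp [h1], ?_, ?_⟩
  · intro s hs
    rw [List.mem_reverse, List.mem_map] at hs
    obtain ⟨x, hx, rfl⟩ := hs
    exact stdGens_inv (h2 x hx)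
  · rw [← List.prod_inv_reverse, h3]

lemma SRep.commutator {g g' : SteinbergA2 (MvPolynomial (Fin m) ℤ)} {n n' : ℕ}
    (h : SRep m g n) (h' : SRep m g' n') : SRep m ⁅g, g'⁆ (2 * n + 2 * n') := by
  rw [commutatorElement_def]
  exact (((h.mul h').mul h.inv).mul h'.inv).mono (by omega)

lemma SRep.gen (i j : Fin 3) (h : i ≠ j) {p : MvPolynomial (Fin m) ℤ}
    (hp : p = 1 ∨ p = -1 ∨ ∃ l : Fin m, p = MvPolynomial.X l ∨ p = -MvPolynomial.X l) :
    SRep m (stx i j h p) 1 :=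
  ⟨[stx i j h p], by simp, by simpa using ⟨i, j, h, p, hp, rfl⟩, by simp⟩

lemma wordLength_le_of_rep {g : SteinbergA2 (MvPolynomial (Fin m) ℤ)} {n : ℕ}
    (h : SRep m g n) : wordLength (stdGens m) g ≤ n := by
  obtain ⟨l, h1, h2, h3⟩ := h
  exact le_trans (Nat.sInf_le ⟨l, rfl, h2, h3⟩) h1

end RepAPI
section Core
open MvPolynomial

variable {m : ℕ}

/-- An atom is either `2` or a variable. -/
def IsAtom2 (m : ℕ) (p : MvPolynomial (Fin m) ℤ) : Prop :=
  p = 2 ∨ ∃ l : Fin m, p = MvPolynomial.X l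

lemma srep_atom_list : ∀ c : ℕ, ∀ L : List (MvPolynomial (Fin m) ℤ),
    (∀ p ∈ L, IsAtom2 m p) → L.length ≤ 2 ^ c →
    ∀ (i j : Fin 3) (h : i ≠ j), SRep m (stx i j h L.prod) (2 * 4 ^ c) := by
  intro c
  induction c with
  | zero =>
    intro L hL hlen i j h
    match L, hlen with
    | [], _ =>
      simp only [List.prod_nil]
      exact (SRep.gen i j h (Or.inl rfl)).mono (by norm_num)
    | [p], _ =>
      simp only [List.prod_cons, List.prod_nil, mul_one]
      rcases hL p (by simp) with rfl | ⟨l, rfl⟩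
      · have h2 : (2 : MvPolynomial (Fin m) ℤ) = 1 + 1 := by ring
        rw [h2, ← stx_mul]
        exact ((SRep.gen i j h (Or.inl rfl)).mul (SRep.gen i j h (Or.inl rfl))).mono (by norm_num)
      · exact (SRep.gen i j h (Or.inr (Or.inr ⟨l, Or.inl rfl⟩))).mono (by norm_num)
  | succ c ih =>
    intro L hL hlen i j h
    obtain ⟨k, hik, hkj⟩ := third i j h
    have hL1 : SRep m (stx i k hik (L.take (L.length / 2)).prod) (2 * 4 ^ c) :=
      ih _ (fun p hp => hL p (List.take_subset _ _ hp))
        (by rw [List.length_take]; rw [pow_succ] at hlen; omega) i k hik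
    have hL2 : SRep m (stx k j hkj (L.drop (L.length / 2)).prod) (2 * 4 ^ c) :=
      ih _ (fun p hp => hL p (List.drop_subset _ _ hp))
        (by rw [List.length_drop]; rw [pow_succ] at hlen; omega) k j hkj
    have key : stx i j h L.prod =
        ⁅stx i k hik (L.take (L.length / 2)).prod, stx k j hkj (L.drop (L.length / 2)).prod⁆ := by
      rw [← stx_comm i k j hik hkj h, List.prod_take_mul_prod_drop]
    rw [key]
    exact (hL1.commutator hL2).mono (by ring_nf; omega)

lemma four_pow_log_le (w : ℕ) : 2 * 4 ^ (Nat.log 2 w + 1) ≤ 8 * (1 + w ^ 2) := by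
  rcases Nat.eq_zero_or_pos w with rfl | hw
  · simp [Nat.log_zero_right]
  · have h1 : 2 ^ Nat.log 2 w ≤ w := Nat.pow_log_le_self 2 (by omega)
    have h2 : (4 : ℕ) ^ Nat.log 2 w = (2 ^ Nat.log 2 w) ^ 2 := by
      rw [show (4 : ℕ) = 2 ^ 2 from rfl, ← pow_mul, Nat.mul_comm, pow_mul]
    have h3 : (4 : ℕ) ^ Nat.log 2 w ≤ w ^ 2 := by
      rw [h2]; exact Nat.pow_le_pow_left h1 2
    calc 2 * 4 ^ (Nat.log 2 w + 1) = 8 * 4 ^ Nat.log 2 w := by ring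
    _ ≤ 8 * w ^ 2 := by omega
    _ ≤ 8 * (1 + w ^ 2) := by omega

lemma srep_atom_list' (L : List (MvPolynomial (Fin m) ℤ)) (hL : ∀ p ∈ L, IsAtom2 m p)
    (i j : Fin 3) (h : i ≠ j) : SRep m (stx i j h L.prod) (8 * (1 + L.length ^ 2)) := by
  have hlen : L.length ≤ 2 ^ (Nat.log 2 L.length + 1) :=
    (Nat.lt_pow_succ_log_self (by norm_num) _).le
  exact (srep_atom_list _ L hL hlen i j h).mono (four_pow_log_le _)

lemma exists_mon_list (v : Fin m → ℕ) :
    ∃ M : List (MvPolynomial (Fin m) ℤ), (∀ p ∈ M, ∃ l, p = MvPolynomial.X l) ∧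
      M.length = ∑ l, v l ∧ M.prod = ∏ l, MvPolynomial.X l ^ v l := by
  classical
  suffices hs : ∀ s : Finset (Fin m), ∃ M : List (MvPolynomial (Fin m) ℤ),
      (∀ p ∈ M, ∃ l, p = MvPolynomial.X l) ∧
      M.length = ∑ l ∈ s, v l ∧ M.prod = ∏ l ∈ s, MvPolynomial.X l ^ v l from hs Finset.univ
  intro s
  induction s using Finset.induction_on with
  | empty => exact ⟨[], by simp, by simp, by simp⟩
  | @insert a s ha ih =>
    obtain ⟨M, hM1, hM2, hM3⟩ := ih
    refine ⟨List.replicate (v a) (MvPolynomial.X a) ++ M, ?_, ?_, ?_⟩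
    · intro p hp
      rcases List.mem_append.mp hp with hp | hp
      · exact ⟨a, (List.eq_of_mem_replicate hp)⟩
      · exact hM1 p hp
    · rw [List.length_append, List.length_replicate, hM2, Finset.sum_insert ha]
    · rw [List.prod_append, List.prod_replicate, hM3, Finset.prod_insert ha]

lemma srep_monomial (d : ℕ) (v : Fin m → ℕ) (i j : Fin 3) (h : i ≠ j) :
    SRep m (stx i j h ((2 : MvPolynomial (Fin m) ℤ) ^ d * ∏ l, MvPolynomial.X l ^ v l))
      (8 * (1 + (d + ∑ l, v l) ^ 2)) := by
  obtain ⟨M, hM1, hM2, hM3⟩ := exists_mon_list v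
  have hL : ∀ p ∈ List.replicate d (2 : MvPolynomial (Fin m) ℤ) ++ M, IsAtom2 m p := by
    intro p hp
    rcases List.mem_append.mp hp with hp | hp
    · exact Or.inl (List.eq_of_mem_replicate hp)
    · exact Or.inr (hM1 p hp)
  have := srep_atom_list' _ hL i j h
  rw [List.prod_append, List.prod_replicate, hM3, List.length_append,
    List.length_replicate, hM2] at this
  exact this

end Core
section Ints
open MvPolynomial

variable {m : ℕ}

lemma srep_pow2 (d : ℕ) (i j : Fin 3) (h : i ≠ j) :
    SRep m (stx i j h ((2 : MvPolynomial (Fin m) ℤ) ^ d)) (8 * (1 + d ^ 2)) := by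
  have := srep_monomial (m := m) d (fun _ => 0) i j h
  simp only [pow_zero, Finset.prod_const_one, mul_one, Finset.sum_const_zero, add_zero] at this
  exact this

lemma srep_nat (i j : Fin 3) (h : i ≠ j) :
    ∀ K : ℕ, ∀ a : ℕ, a < 2 ^ K →
      SRep m (stx i j h (a : MvPolynomial (Fin m) ℤ)) (8 * K * (1 + K ^ 2)) := by
  intro K
  induction K with
  | zero =>
    intro a ha
    interval_cases a
    simp only [Nat.cast_zero, stx_zero]
    exact SRep.one.mono (by omega)
  | succ K ih =>
    intro a ha
    by_cases hK : a < 2 ^ K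
    · exact (ih a hK).mono (by nlinarith)
    · push_neg at hK
      have hb : a - 2 ^ K < 2 ^ K := by rw [pow_succ] at ha; omega
      have hsplit : (a : MvPolynomial (Fin m) ℤ) =
          ((a - 2 ^ K : ℕ) : MvPolynomial (Fin m) ℤ) + (2 : MvPolynomial (Fin m) ℤ) ^ K := by
        push_cast [Nat.cast_sub hK]; ring
      rw [hsplit, ← stx_mul]
      exact ((ih _ hb).mul (srep_pow2 K i j h)).mono (by nlinarith)

lemma srep_int (i j : Fin 3) (h : i ≠ j) (a : ℤ) (ha : a ≠ 0) :
    SRep m (stx i j h ((a : ℤ) : MvPolynomial (Fin m) ℤ))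
      (8 * (Nat.log 2 a.natAbs + 1) * (1 + (Nat.log 2 a.natAbs + 1) ^ 2)) := by
  set K : ℕ := Nat.log 2 a.natAbs + 1 with hKdef
  have hA : a.natAbs < 2 ^ K := Nat.lt_pow_succ_log_self (by norm_num) _
  have hnat := srep_nat (m := m) i j h K a.natAbs hA
  rcases Int.natAbs_eq a with heq | heq
  · have : ((a : ℤ) : MvPolynomial (Fin m) ℤ) = ((a.natAbs : ℕ) : MvPolynomial (Fin m) ℤ) := by
      conv_lhs => rw [heq]
      rw [Int.cast_natCast]
    rwa [this]
  · have : ((a : ℤ) : MvPolynomial (Fin m) ℤ) = -((a.natAbs : ℕ) : MvPolynomial (Fin m) ℤ) := by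
      conv_lhs => rw [heq]
      rw [Int.cast_neg, Int.cast_natCast]
    rw [this, stx_neg]
    exact hnat.inv

end Ints

/-- Fix `m ≥ 1` and let `S` be the standard generating set of
`St_{A₂}(ℤ[t₁,…,t_m])`.  There is a universal constant `C > 0` such that for all
`1 ≤ i,j ≤ 3` with `i ≠ j`:
(i) for every `d ∈ ℕ` and every monomial `t̲`,
    `|x_{i,j}(2^d·t̲)|_S ≤ C·(1 + (d + deg t̲)²)`; and
(ii) for every `a ∈ ℤ ∖ {0}` and every monomial `t̲`,
    `|x_{i,j}(a·t̲)|_S ≤ C·(1 + (log₂|a|)³ + (deg t̲)²)`. -/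
theorem steinberg_word_length_bound :
    ∃ C : ℝ, 0 < C ∧
      ∀ (m : ℕ), 1 ≤ m → ∀ (i j : Fin 3) (h : i ≠ j),
        (∀ (d : ℕ) (v : Fin m → ℕ),
          (wordLength (stdGens m)
              (stx i j h ((2 ^ d : MvPolynomial (Fin m) ℤ) *
                ∏ l, MvPolynomial.X l ^ v l)) : ℝ) ≤
            C * (1 + ((d : ℝ) + ∑ l, (v l : ℝ)) ^ 2)) ∧
        (∀ a : ℤ, a ≠ 0 → ∀ v : Fin m → ℕ,
          (wordLength (stdGens m)
              (stx i j h ((a : MvPolynomial (Fin m) ℤ) *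
                ∏ l, MvPolynomial.X l ^ v l)) : ℝ) ≤
            C * (1 + (Real.logb 2 |(a : ℝ)|) ^ 3 + (∑ l, (v l : ℝ)) ^ 2)) := by
  refine ⟨300, by norm_num, ?_⟩
  intro m _hm i j h
  constructor
  · intro d v
    have hw := wordLength_le_of_rep (srep_monomial (m := m) d v i j h)
    have hwr : (wordLength (stdGens m)
        (stx i j h ((2 ^ d : MvPolynomial (Fin m) ℤ) * ∏ l, MvPolynomial.X l ^ v l)) : ℝ) ≤
        ((8 * (1 + (d + ∑ l, v l) ^ 2) : ℕ) : ℝ) := Nat.cast_le.mpr hw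
    refine hwr.trans ?_
    push_cast
    nlinarith [sq_nonneg ((d : ℝ) + ∑ l, (v l : ℝ))]
  · intro a ha v
    obtain ⟨k, hik, hkj⟩ := third i j h
    set K : ℕ := Nat.log 2 a.natAbs + 1 with hKdef
    have h1 := srep_int (m := m) i k hik a ha
    have h2 := srep_monomial (m := m) 0 v k j hkj
    rw [pow_zero, one_mul] at h2
    have key : stx i j h ((a : MvPolynomial (Fin m) ℤ) * ∏ l, MvPolynomial.X l ^ v l) =
        ⁅stx i k hik ((a : ℤ) : MvPolynomial (Fin m) ℤ),
          stx k j hkj (∏ l, MvPolynomial.X l ^ v l)⁆ :=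
      stx_comm i k j hik hkj h _ _
    have hrep := h1.commutator h2
    rw [← key] at hrep
    have hw := wordLength_le_of_rep hrep
    have hA1 : 1 ≤ a.natAbs := Int.natAbs_pos.mpr ha
    have habs : |(a : ℝ)| = (a.natAbs : ℝ) := by
      rw [← Int.cast_abs, Int.abs_eq_natAbs, Int.cast_natCast]
    have habspos : (0 : ℝ) < |(a : ℝ)| := by
      rw [habs]; exact_mod_cast Nat.lt_of_lt_of_le Nat.zero_lt_one hA1
    set L : ℝ := Real.logb 2 |(a : ℝ)| with hLdef
    have hL0 : 0 ≤ L := Real.logb_nonneg (by norm_num) (by rw [habs]; exact_mod_cast hA1)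
    have hlog : (Nat.log 2 a.natAbs : ℝ) ≤ L := by
      rw [hLdef, Real.le_logb_iff_rpow_le (by norm_num) habspos, Real.rpow_natCast, habs]
      exact_mod_cast Nat.pow_log_le_self 2 (by omega)
    have hK : (K : ℝ) ≤ L + 1 := by
      rw [hKdef]; push_cast; linarith
    have hK0 : (0 : ℝ) ≤ (K : ℝ) := Nat.cast_nonneg _
    have hwr : (wordLength (stdGens m)
        (stx i j h ((a : MvPolynomial (Fin m) ℤ) * ∏ l, MvPolynomial.X l ^ v l)) : ℝ) ≤
        ((2 * (8 * K * (1 + K ^ 2)) + 2 * (8 * (1 + (0 + ∑ l, v l) ^ 2)) : ℕ) : ℝ) :=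
      Nat.cast_le.mpr hw
    refine hwr.trans ?_
    have hsum : ((∑ l, v l : ℕ) : ℝ) = ∑ l, (v l : ℝ) := by push_cast; rfl
    push_cast [hsum]
    have hx0 : (0 : ℝ) ≤ (Nat.log 2 a.natAbs : ℝ) := Nat.cast_nonneg _
    have hcube : ((Nat.log 2 a.natAbs : ℝ) + 1) ^ 3 ≤ (L + 1) ^ 3 :=
      pow_le_pow_left₀ (by linarith) (by linarith) 3
    nlinarith [hL0, hlog, hx0, hcube, hK, pow_le_pow_left₀ hK0 hK 3, sq_nonneg (L - 1), mul_nonneg hL0 (sq_nonneg (L - 1)),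
      sq_nonneg (∑ l, (v l : ℝ))]
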